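/- Let ν be a strict partition (a strictly decreasing sequence of positive integers ν_1 > ν_2 > ... > ν_ℓ > 0). The barely Yamanouchi word associated to ν, defined as the concatenation seq(ν_ℓ) · seq(ν_{ℓ−1}) · ... · seq(ν_1) where seq(n) = n, n−1, ..., 2, 1, satisfies the shifted lattice condition. -/

import Mathlib

def ShiftedLattice (w : List ℕ) : Prop :=
  ∀ s : List ℕ, s <:+ w → ∀ i : ℕ, 1 ≤ i →
    s.count (i + 1) ≤ s.count i ∧ s.count i ≤ s.count (i + 1) + 1

/-- `seqW n` is the decreasing word `n, n-1, ..., 2, 1`. -/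
def seqW (n : ℕ) : List ℕ := (List.range n).reverse.map (· + 1)

/-- The barely Yamanouchi word of a strict partition `ν = [ν₁, ..., ν_ℓ]` is the
concatenation `seq ν_ℓ · seq ν_{ℓ-1} · ... · seq ν₁`. -/
def barelyY (ν : List ℕ) : List ℕ := (ν.reverse.map seqW).flatten

def W (L : List ℕ) : List ℕ := (L.map seqW).flatten

lemma seqW_succ (n : ℕ) : seqW (n + 1) = (n + 1) :: seqW n := by
  simp [seqW, List.range_succ]

lemma suffix_seqW {t : List ℕ} {n : ℕ} (h : t <:+ seqW n) : ∃ j ≤ n, t = seqW j := by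
  induction n with
  | zero => exact ⟨0, le_refl 0, by simpa [seqW] using List.eq_nil_of_suffix_nil (by simpa [seqW] using h)⟩
  | succ n ih =>
    rw [seqW_succ] at h
    rcases List.suffix_cons_iff.mp h with h | h
    · exact ⟨n + 1, le_refl _, by rw [h, seqW_succ]⟩
    · obtain ⟨j, hj, ht⟩ := ih h
      exact ⟨j, Nat.le_succ_of_le hj, ht⟩

lemma suffix_append' {s l₁ l₂ : List ℕ} (h : s <:+ l₁ ++ l₂) :
    s <:+ l₂ ∨ ∃ t, t <:+ l₁ ∧ s = t ++ l₂ := by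
  obtain ⟨u, hu⟩ := h
  rcases List.append_eq_append_iff.mp hu with ⟨a', h1, h2⟩ | ⟨c', h1, h2⟩
  · exact Or.inr ⟨a', ⟨u, h1.symm⟩, h2⟩
  · exact Or.inl ⟨c', h2.symm⟩

lemma suffix_W {L : List ℕ} (h : List.Chain' (· < ·) L) {s : List ℕ} (hs : s <:+ W L) :
    ∃ M, List.Chain' (· < ·) M ∧ s = W M := by
  induction L with
  | nil =>
    exact ⟨[], List.isChain_nil, by simpa [W] using List.eq_nil_of_suffix_nil (by simpa [W] using hs)⟩
  | cons a L ih =>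
    have hW : W (a :: L) = seqW a ++ W L := by simp [W]
    rw [hW] at hs
    rcases suffix_append' hs with h1 | ⟨t, ht, rfl⟩
    · exact ih h.tail h1
    · obtain ⟨j, hj, rfl⟩ := suffix_seqW ht
      rcases Nat.eq_zero_or_pos j with rfl | hjpos
      · exact ⟨L, h.tail, by simp [seqW, W]⟩
      · refine ⟨j :: L, ?_, by simp [W]⟩
        unfold List.Chain'
        rw [List.isChain_cons]
        refine ⟨fun b hb => lt_of_le_of_lt hj ((List.isChain_cons.mp h).1 b hb), h.tail⟩

lemma count_seqW {i : ℕ} (hi : 1 ≤ i) (n : ℕ) :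
    (seqW n).count i = if i ≤ n then 1 else 0 := by
  induction n with
  | zero => simp [seqW, show ¬ i ≤ 0 by omega]
  | succ n ih =>
    rw [seqW_succ, List.count_cons, ih]
    split_ifs <;> simp_all <;> omega

lemma count_W {i : ℕ} (hi : 1 ≤ i) (L : List ℕ) :
    (W L).count i = L.countP (fun m => decide (i ≤ m)) := by
  induction L with
  | nil => simp [W]
  | cons a L ih =>
    have hW : W (a :: L) = seqW a ++ W L := by simp [W]
    rw [hW, List.count_append, ih, List.countP_cons, count_seqW hi]
    split_ifs <;> simp_all <;> omega

lemma countP_split (i : ℕ) (L : List ℕ) :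
    L.countP (fun m => decide (i ≤ m)) =
      L.countP (fun m => decide (i + 1 ≤ m)) + L.count i := by
  induction L with
  | nil => simp
  | cons a L ih =>
    rw [List.countP_cons, List.countP_cons, List.count_cons, ih]
    rcases Nat.lt_trichotomy a i with h | rfl | h
    · simp [Nat.not_le.mpr h, Nat.ne_of_lt h, show ¬ (i + 1 ≤ a) by omega]
    · simp; omega
    · simp [show i + 1 ≤ a from h, Nat.le_of_lt h, Nat.ne_of_gt h]; omega

theorem barelyY_shiftedLattice (ν : List ℕ) (hchain : List.Chain' (· > ·) ν)
    (hpos : ∀ x ∈ ν, 0 < x) :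
    ShiftedLattice (barelyY ν) := by
  have hrev : List.Chain' (· < ·) ν.reverse := by
    unfold List.Chain'
    rw [List.isChain_reverse]; exact hchain
  intro s hs i hi
  obtain ⟨M, hM, rfl⟩ := suffix_W hrev (by simpa [barelyY, W] using hs)
  have hnd : M.Nodup := by
    have hp : M.Pairwise (· < ·) := List.isChain_iff_pairwise.mp hM
    exact hp.imp fun h => ne_of_lt h
  have hc1 : M.count i ≤ 1 := List.nodup_iff_count_le_one.mp hnd i
  rw [count_W hi, count_W (by omega : 1 ≤ i + 1), countP_split i M]
  constructor
  · omega
  · omega
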